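/- Let A, B be finite nonempty sets of integers with min A = min B = 0, max A = M, max B = N, and M ≥ N. If x ∈ [0, N] and x ∉ A + B, then |[0,x] \ A| + |[0,x] \ B| ≥ x + 1. -/
import Mathlib

open scoped Pointwise

theorem stmt1 (A B : Finset ℤ) (hA : A.Nonempty) (hB : B.Nonempty) (M N : ℤ)
    (hminA : A.min' hA = 0) (hminB : B.min' hB = 0)
    (hmaxA : A.max' hA = M) (hmaxB : B.max' hB = N) (hMN : N ≤ M)
    (x : ℤ) (hx : x ∈ Finset.Icc 0 N) (hxAB : x ∉ A + B) :
    x + 1 ≤ ((Finset.Icc 0 x \ A).card : ℤ) + ((Finset.Icc 0 x \ B).card : ℤ) := by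
  obtain ⟨hx0, hxN⟩ := Finset.mem_Icc.mp hx
  have key : Finset.Icc 0 x ⊆ (Finset.Icc 0 x \ A) ∪
      ((Finset.Icc 0 x \ B).image (fun t => x - t)) := by
    intro t ht
    obtain ⟨ht0, htx⟩ := Finset.mem_Icc.mp ht
    by_cases hta : t ∈ A
    · have hxb : x - t ∉ B := by
        intro hb
        exact hxAB (by
          have : t + (x - t) ∈ A + B := Finset.add_mem_add hta hb
          simpa using this)
      refine Finset.mem_union_right _ ?_
      refine Finset.mem_image.mpr ⟨x - t, ?_, by ring⟩
      exact Finset.mem_sdiff.mpr ⟨Finset.mem_Icc.mpr ⟨by omega, by omega⟩, hxb⟩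
    · exact Finset.mem_union_left _ (Finset.mem_sdiff.mpr ⟨ht, hta⟩)
  have h1 : (Finset.Icc 0 x).card ≤ (Finset.Icc 0 x \ A).card +
      (Finset.Icc 0 x \ B).card := by
    calc (Finset.Icc 0 x).card ≤ ((Finset.Icc 0 x \ A) ∪
        ((Finset.Icc 0 x \ B).image (fun t => x - t))).card := Finset.card_le_card key
      _ ≤ (Finset.Icc 0 x \ A).card + ((Finset.Icc 0 x \ B).image (fun t => x - t)).card :=
        Finset.card_union_le _ _
      _ ≤ _ := Nat.add_le_add_left Finset.card_image_le _
  have h2 : (Finset.Icc 0 x).card = (x + 1).toNat := by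
    rw [Int.card_Icc]; ring_nf
  omega
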